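/- Let X be a Tychonoff (completely regular Hausdorff) space. If every discrete family of nonempty open subsets of X is finite, then every locally finite family of nonempty open subsets of X is finite. -/

import Mathlib

open Set Topology Cardinal

universe u

/-- A local π-base at `p`: a family of nonempty open sets such that every open
set containing `p` contains a member of the family. -/
def IsLocalPiBase {X : Type u} [TopologicalSpace X] (p : X) (𝓑 : Set (Set X)) : Prop :=
  (∀ b ∈ 𝓑, IsOpen b ∧ b.Nonempty) ∧
  ∀ U : Set X, IsOpen U → p ∈ U → ∃ b ∈ 𝓑, b ⊆ U

/-- A family of sets is centered if it has the finite intersection property. -/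
def Centered {X : Type u} (𝓑 : Set (Set X)) : Prop :=
  ∀ F : Finset (Set X), F.Nonempty → ↑F ⊆ 𝓑 → (⋂₀ (F : Set (Set X))).Nonempty

/-- A family of sets is linked if any two members meet. -/
def Linked {X : Type u} (𝓑 : Set (Set X)) : Prop :=
  ∀ b₁ ∈ 𝓑, ∀ b₂ ∈ 𝓑, (b₁ ∩ b₂).Nonempty

/-- A decreasing local π-base at `p`, given as a ⊆-decreasing sequence of
nonempty open sets. -/
def IsDecreasingLocalPiBase {X : Type u} [TopologicalSpace X] (p : X) (A : ℕ → Set X) : Prop :=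
  (∀ n, IsOpen (A n) ∧ (A n).Nonempty) ∧
  (∀ n, A (n + 1) ⊆ A n) ∧
  ∀ U : Set X, IsOpen U → p ∈ U → ∃ n, A n ⊆ U

/-- A cellular family: pairwise disjoint nonempty open sets. -/
def IsCellular {X : Type u} [TopologicalSpace X] (𝓒 : Set (Set X)) : Prop :=
  (∀ c ∈ 𝓒, IsOpen c ∧ c.Nonempty) ∧ 𝓒.PairwiseDisjoint id

/-- A weak closed pseudobase at `p`: a family of open sets whose closures
intersect exactly in `{p}`. -/
def IsWeakClosedPseudobase {X : Type u} [TopologicalSpace X] (p : X) (𝓑 : Set (Set X)) : Prop :=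
  (∀ b ∈ 𝓑, IsOpen b) ∧ (⋂ b ∈ 𝓑, closure b) = {p}

/-- A neighborhood base at `p` consisting of open sets containing `p`. -/
def IsNhdBase {X : Type u} [TopologicalSpace X] (p : X) (𝓑 : Set (Set X)) : Prop :=
  (∀ b ∈ 𝓑, IsOpen b ∧ p ∈ b) ∧
  ∀ U : Set X, IsOpen U → p ∈ U → ∃ b ∈ 𝓑, b ⊆ U

/-- A family of sets is locally finite if every point has an open neighborhood
meeting only finitely many members. -/
def LocFinFamily {X : Type u} [TopologicalSpace X] (𝓒 : Set (Set X)) : Prop :=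
  ∀ x : X, ∃ U : Set X, IsOpen U ∧ x ∈ U ∧ {c ∈ 𝓒 | (c ∩ U).Nonempty}.Finite

/-- A family of sets is discrete if every point has an open neighborhood meeting
at most one member. -/
def DiscreteFamily {X : Type u} [TopologicalSpace X] (𝓒 : Set (Set X)) : Prop :=
  ∀ x : X, ∃ U : Set X, IsOpen U ∧ x ∈ U ∧ {c ∈ 𝓒 | (c ∩ U).Nonempty}.Subsingleton

/-- in a Tychonoff space, if every discrete family of nonempty open
sets is finite, then every locally finite family of nonempty open sets is finite. -/
theorem locallyFinite_finite_of_discrete_finite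
    {X : Type u} [TopologicalSpace X] [CompletelyRegularSpace X] [T1Space X]
    (hd : ∀ 𝓒 : Set (Set X),
      (∀ c ∈ 𝓒, IsOpen c ∧ c.Nonempty) → DiscreteFamily 𝓒 → 𝓒.Finite) :
    ∀ 𝓒 : Set (Set X),
      (∀ c ∈ 𝓒, IsOpen c ∧ c.Nonempty) → LocFinFamily 𝓒 → 𝓒.Finite := by
  intro 𝓒 hopen hlf
  by_contra hfin
  have hinf : 𝓒.Infinite := hfin
  set e := hinf.natEmbedding with he
  set C : ℕ → Set X := fun n => (e n : Set X) with hC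
  have hCmem : ∀ n, C n ∈ 𝓒 := fun n => (e n).2
  have hCinj : Function.Injective C := fun a b h => e.injective (Subtype.ext h)
  choose x hx using fun n => (hopen _ (hCmem n)).2
  -- bump functions
  have hbump : ∀ n, ∃ g : X → ℝ, Continuous g ∧ g (x n) = 1 ∧ (∀ y, 0 ≤ g y) ∧
      Function.support g ⊆ C n := by
    intro n
    obtain ⟨f, hfc, hf0, hf1⟩ := CompletelyRegularSpace.completely_regular (x n) (C n)ᶜ
      (hopen _ (hCmem n)).1.isClosed_compl (by simp [hx n])
    refine ⟨fun y => 1 - (f y : ℝ), by continuity, by simp [hf0], fun y => ?_, fun y hy => ?_⟩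
    · have := (f y).2.2; simp; linarith
    · by_contra hyc
      have h1 : f y = 1 := hf1 hyc
      simp [Function.mem_support, h1] at hy
  choose g hgc hg1 hg0 hgs using hbump
  -- local finiteness of the supports
  have hlfC : LocallyFinite C := by
    intro y
    obtain ⟨U, hUo, hyU, hUfin⟩ := hlf y
    refine ⟨U, hUo.mem_nhds hyU, ?_⟩
    have : Set.MapsTo C {n | (C n ∩ U).Nonempty} {c ∈ 𝓒 | (c ∩ U).Nonempty} := by
      intro n hn; exact ⟨hCmem n, hn⟩
    exact Set.Finite.of_finite_image (hUfin.subset this.image_subset)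
      (hCinj.injOn)
  have hlfsupp : LocallyFinite fun n : ℕ => Function.support fun y => (n : ℝ) * g n y := by
    refine hlfC.subset fun n => ?_
    intro y hy
    have : g n y ≠ 0 := fun h0 => hy (by simp [Function.mem_support, h0])
    exact hgs n this
  set F : X → ℝ := fun y => ∑ᶠ n : ℕ, (n : ℝ) * g n y with hF
  have hFc : Continuous F := continuous_finsum (fun n => by
    exact continuous_const.mul (hgc n)) hlfsupp
  have hFnn : ∀ (y : X) (n : ℕ), (0:ℝ) ≤ (n : ℝ) * g n y := fun y n =>
    mul_nonneg (Nat.cast_nonneg n) (hg0 n y)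
  -- pointwise finite support
  have hptfin : ∀ y : X, (Function.support fun n : ℕ => (n : ℝ) * g n y).Finite := by
    intro y
    obtain ⟨U, hU⟩ := hlfsupp y
    refine hU.2.subset fun n hn => ?_
    refine ⟨y, hn, mem_of_mem_nhds hU.1⟩
  have hFge : ∀ n : ℕ, (n : ℝ) ≤ F (x n) := by
    intro n
    have := single_le_finsum (f := fun m : ℕ => (m : ℝ) * g m (x n)) n (hptfin (x n))
      (fun m => hFnn (x n) m)
    simpa [hg1 n] using this
  -- unboundedness
  have hub : ∀ M : ℝ, ∃ y : X, M < F y := by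
    intro M
    refine ⟨x (⌈M⌉₊ + 1), lt_of_lt_of_le ?_ (hFge _)⟩
    have := Nat.le_ceil M
    push_cast
    linarith
  choose t ht using hub
  -- a sequence with F-values increasing with gaps > 2
  let s : ℕ → X := fun k => Nat.rec (t 0) (fun _ prev => t (F prev + 2)) k
  set r : ℕ → ℝ := fun k => F (s k) with hr
  have hstep : ∀ k, r k + 2 < r (k + 1) := fun k => ht (F (s k) + 2)
  have hgap : ∀ j k, j < k → r j + 2 < r k := by
    intro j k hjk
    induction k with
    | zero => omega
    | succ k ih =>
      rcases Nat.lt_succ_iff_lt_or_eq.1 hjk with h | h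
      · have := hstep k
        have := ih h
        linarith
      · subst h; exact hstep j
  have hne : ∀ j k, |r j - r k| < 2 → j = k := by
    intro j k h
    rcases lt_trichotomy j k with hlt | heq | hgt
    · have := hgap j k hlt
      rw [abs_sub_lt_iff] at h
      linarith [h.2]
    · exact heq
    · have := hgap k j hgt
      rw [abs_sub_lt_iff] at h
      linarith [h.1]
  set W : ℕ → Set X := fun k => F ⁻¹' Metric.ball (r k) (1/2) with hW
  have hWmem : ∀ y k, y ∈ W k ↔ |F y - r k| < 1/2 := by
    intro y k
    simp [hW, Metric.mem_ball, Real.dist_eq]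
  have hself : ∀ k, s k ∈ W k := by
    intro k
    rw [hWmem]
    simp [hr]
  have hWinj : Function.Injective W := by
    intro j k h
    have : s j ∈ W k := h ▸ hself j
    rw [hWmem] at this
    exact hne j k (by rw [hr] at this ⊢; linarith [abs_nonneg (r j - r k), this])
  have hWopen : ∀ c ∈ Set.range W, IsOpen c ∧ c.Nonempty := by
    rintro _ ⟨k, rfl⟩
    exact ⟨Metric.isOpen_ball.preimage hFc, ⟨s k, hself k⟩⟩
  have hWdisc : DiscreteFamily (Set.range W) := by
    intro y
    refine ⟨F ⁻¹' Metric.ball (F y) (1/2), Metric.isOpen_ball.preimage hFc,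
      by simp, ?_⟩
    rintro _ ⟨⟨j, rfl⟩, z, hz1, hz2⟩ _ ⟨⟨k, rfl⟩, w, hw1, hw2⟩
    simp only [Set.mem_preimage, Metric.mem_ball, Real.dist_eq] at hz2 hw2
    rw [hWmem] at hz1 hw1
    have hz2' : |F y - F z| < 1/2 := by rw [abs_sub_comm]; exact hz2
    have hw2' : |F y - F w| < 1/2 := by rw [abs_sub_comm]; exact hw2
    have hj : |F y - r j| < 1 := by
      calc |F y - r j| ≤ |F y - F z| + |F z - r j| := abs_sub_le _ _ _
        _ < 1 := by linarith
    have hk : |F y - r k| < 1 := by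
      calc |F y - r k| ≤ |F y - F w| + |F w - r k| := abs_sub_le _ _ _
        _ < 1 := by linarith
    have : |r j - r k| < 2 := by
      calc |r j - r k| ≤ |r j - F y| + |F y - r k| := abs_sub_le _ _ _
        _ < 2 := by rw [abs_sub_comm (r j) (F y)]; linarith
    rw [hne j k this]
  have := hd (Set.range W) hWopen hWdisc
  exact Set.infinite_range_of_injective hWinj this
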